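/- Fix k ≥ 2, order the components of E_k(ω) from left to right as I_k^1, …, I_k^{2^k}, and let J_k^j denote the open interval between I_k^j and I_k^{j+1} (1 ≤ j ≤ 2^k − 1). If j = 2^ℓ m with 1 ≤ ℓ ≤ k−1 and m odd, then J_k^j coincides with the gap J_{k−ℓ}^m of the (k−ℓ)-th stage and its length satisfies |J_k^j| = q_{k−ℓ}·L_{k−ℓ−1} = 2^{ℓ+1} q_{k−ℓ} (∏_{i=k−ℓ}^{k} (1−q_i))^{-1} · |I_k^j|, where |I_k^j| = L_k. -/

import Mathlib

/-- `L_n = 2^{-n} ∏_{i=1}^n (1 - q_i)`. -/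
noncomputable def cantorL (q : ℕ → ℝ) (n : ℕ) : ℝ :=
  (∏ i ∈ Finset.Icc 1 n, (1 - q i)) / 2 ^ n

/-- Left endpoint of the `j`-th level-`k` interval `I_k^j` (`1 ≤ j ≤ 2^k`), i.e. the
level-`k` interval whose label `ε = (ε_1,…,ε_k)` has binary value
`v(ε) = ∑ ε_i 2^{k-i} = j - 1`; so `I_k^j = [cantorAIdx q k j, cantorAIdx q k j + L_k]`
and, for `1 ≤ j ≤ 2^k - 1`, the gap `J_k^j` between `I_k^j` and `I_k^{j+1}` is the open
interval `(cantorAIdx q k j + L_k, cantorAIdx q k (j+1))`. -/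
noncomputable def cantorAIdx (q : ℕ → ℝ) (k j : ℕ) : ℝ :=
  ∑ i ∈ Finset.Icc 1 k, if Nat.testBit (j - 1) (k - i) then cantorL q (i - 1) - cantorL q i else 0

lemma cantorTele (q : ℕ → ℝ) (n : ℕ) : ∀ ℓ : ℕ,
    ∑ i ∈ Finset.Ioc n (n + ℓ), (cantorL q (i - 1) - cantorL q i)
      = cantorL q n - cantorL q (n + ℓ) := by
  intro ℓ
  induction ℓ with
  | zero => simp
  | succ t ih =>
    rw [show n + (t+1) = (n+t) + 1 by ring, ← Finset.Icc_add_one_left_eq_Ioc,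
      Finset.sum_Icc_succ_top (by omega), Finset.Icc_add_one_left_eq_Ioc, ih]
    simp

lemma cantorA_split (q : ℕ → ℝ) (n ℓ j : ℕ) :
    cantorAIdx q (n + ℓ) j
      = (∑ i ∈ Finset.Icc 1 n,
          if Nat.testBit (j - 1) (n + ℓ - i) then cantorL q (i - 1) - cantorL q i else 0)
        + ∑ i ∈ Finset.Ioc n (n + ℓ),
          if Nat.testBit (j - 1) (n + ℓ - i) then cantorL q (i - 1) - cantorL q i else 0 := by
  rw [cantorAIdx, show Finset.Icc 1 (n + ℓ) = Finset.Ioc 0 (n + ℓ) from Finset.Icc_add_one_left_eq_Ioc ..,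
    ← Finset.sum_Ioc_consecutive _ (Nat.zero_le n) (Nat.le_add_right n ℓ),
    ← Finset.Icc_add_one_left_eq_Ioc, zero_add]

lemma cantorA_shift1 (q : ℕ → ℝ) (n ℓ m : ℕ) :
    cantorAIdx q (n + ℓ) (2 ^ ℓ * m + 1) = cantorAIdx q n (m + 1) := by
  rw [cantorA_split, cantorAIdx]
  simp only [Nat.add_sub_cancel]
  have h2 : ∑ i ∈ Finset.Ioc n (n + ℓ),
      (if Nat.testBit (2 ^ ℓ * m) (n + ℓ - i) then cantorL q (i - 1) - cantorL q i else 0) = 0 := by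
    apply Finset.sum_eq_zero
    intro i hi
    simp only [Finset.mem_Ioc] at hi
    rw [Nat.testBit_two_pow_mul]
    have : ¬ (n + ℓ - i ≥ ℓ) := by omega
    simp [this]
  rw [h2, add_zero]
  apply Finset.sum_congr rfl
  intro i hi
  simp only [Finset.mem_Icc] at hi
  rw [Nat.testBit_two_pow_mul]
  have h1 : n + ℓ - i ≥ ℓ := by omega
  have h3 : n + ℓ - i - ℓ = n - i := by omega
  simp [h1, h3]

lemma cantorA_shift2 (q : ℕ → ℝ) (n ℓ m : ℕ) (hm : 1 ≤ m) :
    cantorAIdx q (n + ℓ) (2 ^ ℓ * m)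
      = cantorAIdx q n m + (cantorL q n - cantorL q (n + ℓ)) := by
  have harg : 2 ^ ℓ * m - 1 = 2 ^ ℓ * (m - 1) + (2 ^ ℓ - 1) := by
    have := Nat.one_le_two_pow (n := ℓ)
    cases' Nat.exists_eq_add_of_le hm with t ht
    subst ht
    have e : 2 ^ ℓ * (1 + t) = 2 ^ ℓ * t + 2 ^ ℓ := by ring
    rw [show (1 + t) - 1 = t by omega, e]
    omega
  rw [cantorA_split, cantorAIdx, harg]
  have hb : 2 ^ ℓ - 1 < 2 ^ ℓ := by have := Nat.one_le_two_pow (n := ℓ); omega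
  have h2 : ∑ i ∈ Finset.Ioc n (n + ℓ),
      (if Nat.testBit (2 ^ ℓ * (m-1) + (2^ℓ - 1)) (n + ℓ - i) then cantorL q (i - 1) - cantorL q i else 0)
      = cantorL q n - cantorL q (n + ℓ) := by
    rw [← cantorTele q n ℓ]
    apply Finset.sum_congr rfl
    intro i hi
    simp only [Finset.mem_Ioc] at hi
    rw [Nat.testBit_two_pow_mul_add _ hb]
    have : n + ℓ - i < ℓ := by omega
    simp [this]
  rw [h2]
  congr 1
  apply Finset.sum_congr rfl
  intro i hi
  simp only [Finset.mem_Icc] at hi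
  rw [Nat.testBit_two_pow_mul_add _ hb]
  have h1 : ¬ (n + ℓ - i < ℓ) := by omega
  have h3 : n + ℓ - i - ℓ = n - i := by omega
  simp [h1, h3]

lemma cantorA_odd_step (q : ℕ → ℝ) (n m : ℕ) (hn : 1 ≤ n) (hm : Odd m) :
    cantorAIdx q n (m + 1) = cantorAIdx q n m + (cantorL q (n - 1) - cantorL q n) := by
  obtain ⟨t, ht⟩ := hm
  have hsplit : ∀ j : ℕ, cantorAIdx q n j
      = (∑ i ∈ Finset.Icc 1 (n-1),
          if Nat.testBit (j - 1) (n - i) then cantorL q (i - 1) - cantorL q i else 0)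
        + (if Nat.testBit (j - 1) 0 then cantorL q (n - 1) - cantorL q n else 0) := by
    intro j
    rw [cantorAIdx, show Finset.Icc 1 n = Finset.Ioc 0 n from Finset.Icc_add_one_left_eq_Ioc ..,
      ← Finset.sum_Ioc_consecutive _ (Nat.zero_le (n-1)) (by omega : n - 1 ≤ n)]
    have hsing : Finset.Ioc (n-1) n = {n} := by
      ext x; simp only [Finset.mem_Ioc, Finset.mem_singleton]; omega
    rw [hsing, Finset.sum_singleton, Nat.sub_self, ← Finset.Icc_add_one_left_eq_Ioc, zero_add]
  rw [hsplit, hsplit]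
  simp only [Nat.add_sub_cancel]
  have hm1 : m - 1 = 2 * t := by omega
  have hb0 : Nat.testBit m 0 = true := by
    rw [Nat.testBit_zero, decide_eq_true_eq]; omega
  have hb0' : Nat.testBit (m - 1) 0 = false := by
    rw [Nat.testBit_zero, decide_eq_false_iff_not]; omega
  rw [hb0, hb0', if_pos, if_neg (by simp)]
  · have : ∀ i ∈ Finset.Icc 1 (n-1),
        (if Nat.testBit m (n - i) then cantorL q (i - 1) - cantorL q i else 0)
        = (if Nat.testBit (m-1) (n - i) then cantorL q (i - 1) - cantorL q i else 0) := by
      intro i hi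
      simp only [Finset.mem_Icc] at hi
      have h1 : n - i = (n - i - 1) + 1 := by omega
      rw [h1, Nat.testBit_add_one, Nat.testBit_add_one,
        show m / 2 = t by omega, show (m-1) / 2 = t by omega]
    rw [Finset.sum_congr rfl this]
    ring
  · rfl

lemma cantorL_succ (q : ℕ → ℝ) (n : ℕ) (hn : 1 ≤ n) :
    2 * cantorL q n = cantorL q (n - 1) * (1 - q n) := by
  cases' Nat.exists_eq_add_of_le hn with t ht
  subst ht
  simp only [cantorL, Nat.add_sub_cancel_left, show 1 + t - 1 = t by omega]
  rw [show 1 + t = t + 1 by ring, Finset.prod_Icc_succ_top (by omega)]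
  rw [pow_succ]
  ring

lemma cantorL_split (q : ℕ → ℝ) (hq : ∀ i, 1 ≤ i → q i ∈ Set.Ioo (0 : ℝ) 1)
    (n ℓ : ℕ) (hn : 1 ≤ n) :
    cantorL q (n - 1)
      = 2 ^ (ℓ + 1) * (∏ i ∈ Finset.Icc n (n + ℓ), (1 - q i))⁻¹ * cantorL q (n + ℓ) := by
  have hP : 0 < ∏ i ∈ Finset.Icc n (n + ℓ), (1 - q i) := by
    apply Finset.prod_pos
    intro i hi
    simp only [Finset.mem_Icc] at hi
    have := hq i (by omega)
    simp only [Set.mem_Ioo] at this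
    linarith [this.2]
  have hsplit : (∏ i ∈ Finset.Icc 1 (n + ℓ), (1 - q i))
      = (∏ i ∈ Finset.Icc 1 (n - 1), (1 - q i)) * ∏ i ∈ Finset.Icc n (n + ℓ), (1 - q i) := by
    rw [show Finset.Icc 1 (n + ℓ) = Finset.Ioc 0 (n + ℓ) from Finset.Icc_add_one_left_eq_Ioc ..,
      ← Finset.prod_Ioc_consecutive _ (Nat.zero_le (n - 1)) (by omega : n - 1 ≤ n + ℓ),
      ← Finset.Icc_add_one_left_eq_Ioc, ← Finset.Icc_add_one_left_eq_Ioc, show n - 1 + 1 = n by omega, zero_add]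
  have hpow : (2 : ℝ) ^ (n + ℓ) = 2 ^ (n - 1) * 2 ^ (ℓ + 1) := by
    rw [← pow_add]
    congr 1
    omega
  rw [cantorL, cantorL, hsplit, hpow]
  have h2 : (2 : ℝ) ^ (n - 1) ≠ 0 := by positivity
  have h3 : (2 : ℝ) ^ (ℓ + 1) ≠ 0 := by positivity
  field_simp

/-- for `k ≥ 2` and an even index `j = 2^ℓ m` (`1 ≤ ℓ ≤ k−1`, `m` odd,
`1 ≤ j ≤ 2^k − 1`), the gap `J_k^j` coincides with the gap `J_{k−ℓ}^m` of the `(k−ℓ)`-th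
stage, and its length equals `q_{k−ℓ}·L_{k−ℓ−1} = 2^{ℓ+1} q_{k−ℓ} (∏_{i=k−ℓ}^k (1−q_i))⁻¹·L_k`
(where `|I_k^j| = L_k`). -/
theorem cantor_even_gap (q : ℕ → ℝ) (hq : ∀ i, 1 ≤ i → q i ∈ Set.Ioo (0 : ℝ) 1)
    (k ℓ m j : ℕ) (hk : 2 ≤ k) (hℓ₁ : 1 ≤ ℓ) (hℓ₂ : ℓ ≤ k - 1) (hm : Odd m)
    (hj : j = 2 ^ ℓ * m) (hj₂ : j ≤ 2 ^ k - 1) :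
    Set.Ioo (cantorAIdx q k j + cantorL q k) (cantorAIdx q k (j + 1))
      = Set.Ioo (cantorAIdx q (k - ℓ) m + cantorL q (k - ℓ)) (cantorAIdx q (k - ℓ) (m + 1))
    ∧ cantorAIdx q k (j + 1) - (cantorAIdx q k j + cantorL q k)
        = q (k - ℓ) * cantorL q (k - ℓ - 1)
    ∧ cantorAIdx q k (j + 1) - (cantorAIdx q k j + cantorL q k)
        = 2 ^ (ℓ + 1) * q (k - ℓ) * (∏ i ∈ Finset.Icc (k - ℓ) k, (1 - q i))⁻¹ * cantorL q k := by
  obtain ⟨n, hn1, rfl⟩ : ∃ n, 1 ≤ n ∧ k = n + ℓ := ⟨k - ℓ, by omega, by omega⟩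
  subst hj
  rw [Nat.add_sub_cancel]
  have hm1 : 1 ≤ m := hm.pos
  have e1 : cantorAIdx q (n + ℓ) (2 ^ ℓ * m + 1) = cantorAIdx q n (m + 1) :=
    cantorA_shift1 q n ℓ m
  have e2 := cantorA_shift2 q n ℓ m hm1
  have e3 := cantorA_odd_step q n m hn1 hm
  have e4 := cantorL_succ q n hn1
  have hgap : cantorAIdx q (n + ℓ) (2 ^ ℓ * m + 1)
      - (cantorAIdx q (n + ℓ) (2 ^ ℓ * m) + cantorL q (n + ℓ))
      = q n * cantorL q (n - 1) := by
    linear_combination e1 + e3 - e2 - e4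
  refine ⟨?_, hgap, ?_⟩
  · have hl : cantorAIdx q (n + ℓ) (2 ^ ℓ * m) + cantorL q (n + ℓ)
        = cantorAIdx q n m + cantorL q n := by rw [e2]; ring
    rw [hl, e1]
  · rw [hgap, cantorL_split q hq n ℓ hn1]
    ring
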